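/- Let x_1 ≥ x_2 ≥ … ≥ x_n > 0 and y_1 ≥ y_2 ≥ … ≥ y_n > 0 be nonincreasing sequences of positive real numbers such that x_1·x_2·…·x_j ≥ y_1·y_2·…·y_j for every 1 ≤ j ≤ n. Then Σ_{i=1}^n x_i ≥ Σ_{i=1}^n y_i and Σ_{1≤i<j≤n} x_i x_j ≥ Σ_{1≤i<j≤n} y_i y_j. -/

import Mathlib

lemma abel_nonneg (n : ℕ) (c d : ℕ → ℝ) (hmono : ∀ i j, i ≤ j → j < n → c j ≤ c i)
    (hnn : ∀ i, i < n → 0 ≤ c i) (hD : ∀ k, k ≤ n → 0 ≤ ∑ i ∈ Finset.range k, d i) :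
    0 ≤ ∑ i ∈ Finset.range n, c i * d i := by
  induction n generalizing c with
  | zero => simp
  | succ m ih =>
    have e1 : ∑ i ∈ Finset.range m, (c i - c m) * d i
        = (∑ i ∈ Finset.range m, c i * d i) - c m * ∑ i ∈ Finset.range m, d i := by
      rw [Finset.mul_sum, ← Finset.sum_sub_distrib]
      exact Finset.sum_congr rfl fun i _ => by ring
    have key : ∑ i ∈ Finset.range (m+1), c i * d i
        = (∑ i ∈ Finset.range m, (c i - c m) * d i) + c m * ∑ i ∈ Finset.range (m+1), d i := by
      rw [e1, Finset.sum_range_succ (fun i => c i * d i), Finset.sum_range_succ d]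
      ring
    rw [key]
    have h1 : 0 ≤ ∑ i ∈ Finset.range m, (c i - c m) * d i := by
      refine ih _ (fun i j hij hj => ?_) (fun i hi => ?_) (fun k hk => hD k (by omega))
      · simpa using hmono i j hij (by omega)
      · simpa using hmono i m (by omega) (by omega)
    have h2 : 0 ≤ c m * ∑ i ∈ Finset.range (m+1), d i :=
      mul_nonneg (hnn m (by omega)) (hD (m+1) le_rfl)
    linarith

lemma filter_prod_eq (n k : ℕ) (hk : k ≤ n) (f : Fin n → ℝ) (F : ℕ → ℝ)
    (hF : ∀ i : Fin n, F i = f i) :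
    ∏ i ∈ Finset.univ.filter (fun i : Fin n => (i : ℕ) < k), f i
      = ∏ i ∈ Finset.range k, F i := by
  rw [Finset.prod_filter]
  have h1 : ∀ i : Fin n, (if (i : ℕ) < k then f i else 1)
      = (fun m => if m < k then F m else 1) (i : ℕ) := by
    intro i; simp [hF]
  rw [Finset.prod_congr rfl (fun i _ => h1 i),
    Fin.prod_univ_eq_prod_range (fun m => if m < k then F m else 1) n]
  rw [← Finset.prod_filter]
  congr 1
  ext i; simp only [Finset.mem_filter, Finset.mem_range]; omega

lemma fin_sum_eq (n : ℕ) (f : Fin n → ℝ) (F : ℕ → ℝ) (hF : ∀ i : Fin n, F i = f i) :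
    ∑ i, f i = ∑ i ∈ Finset.range n, F i := by
  rw [← Fin.sum_univ_eq_sum_range]
  exact Finset.sum_congr rfl fun i _ => (hF i).symm

lemma pair_sum_eq (n : ℕ) (f : Fin n → ℝ) (F : ℕ → ℝ) (hF : ∀ i : Fin n, F i = f i) :
    ∑ p ∈ Finset.univ.filter (fun p : Fin n × Fin n => p.1 < p.2), f p.1 * f p.2
      = ∑ i ∈ Finset.range n, ∑ j ∈ Finset.range n, if i < j then F i * F j else 0 := by
  rw [Finset.sum_filter, Fintype.sum_prod_type]
  rw [← Fin.sum_univ_eq_sum_range (fun i => ∑ j ∈ Finset.range n, if i < j then F i * F j else 0)]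
  refine Finset.sum_congr rfl fun i _ => ?_
  rw [← Fin.sum_univ_eq_sum_range (fun j => if (i : ℕ) < j then F i * F j else 0)]
  refine Finset.sum_congr rfl fun j _ => ?_
  by_cases h : (i : ℕ) < (j : ℕ)
  · simp [h, Fin.lt_def, hF]
  · simp [h, Fin.lt_def]

/-- Let `x_1 ≥ … ≥ x_n > 0` and `y_1 ≥ … ≥ y_n > 0` be nonincreasing sequences of
positive reals with `x_1 ⋯ x_j ≥ y_1 ⋯ y_j` for every `1 ≤ j ≤ n`. Then
`Σ x_i ≥ Σ y_i` and `Σ_{i<j} x_i x_j ≥ Σ_{i<j} y_i y_j`. -/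
theorem stmt14 (n : ℕ) (x y : Fin n → ℝ)
    (hxanti : ∀ i j : Fin n, i ≤ j → x j ≤ x i) (hxpos : ∀ i, 0 < x i)
    (hyanti : ∀ i j : Fin n, i ≤ j → y j ≤ y i) (hypos : ∀ i, 0 < y i)
    (hprod : ∀ j : ℕ, 1 ≤ j → j ≤ n →
      ∏ i ∈ Finset.univ.filter (fun i : Fin n => (i : ℕ) < j), y i ≤
        ∏ i ∈ Finset.univ.filter (fun i : Fin n => (i : ℕ) < j), x i) :
    (∑ i, y i ≤ ∑ i, x i) ∧
    ∑ p ∈ Finset.univ.filter (fun p : Fin n × Fin n => p.1 < p.2), y p.1 * y p.2 ≤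
      ∑ p ∈ Finset.univ.filter (fun p : Fin n × Fin n => p.1 < p.2), x p.1 * x p.2 := by
  classical
  set X : ℕ → ℝ := fun i => if h : i < n then x ⟨i, h⟩ else 1 with hXdef
  set Y : ℕ → ℝ := fun i => if h : i < n then y ⟨i, h⟩ else 1 with hYdef
  have hXf : ∀ i : Fin n, X i = x i := fun i => by simp [hXdef, i.isLt]
  have hYf : ∀ i : Fin n, Y i = y i := fun i => by simp [hYdef, i.isLt]
  have hXpos : ∀ i, 0 < X i := fun i => by
    by_cases h : i < n <;> simp [hXdef, h] <;> exact hxpos _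
  have hYpos : ∀ i, 0 < Y i := fun i => by
    by_cases h : i < n <;> simp [hYdef, h] <;> exact hypos _
  have hYmono : ∀ i j, i ≤ j → j < n → Y j ≤ Y i := by
    intro i j hij hj
    have hi : i < n := lt_of_le_of_lt hij hj
    have := hyanti ⟨i, hi⟩ ⟨j, hj⟩ hij
    rwa [← hYf ⟨i, hi⟩, ← hYf ⟨j, hj⟩] at this
  set d : ℕ → ℝ := fun i => Real.log (X i) - Real.log (Y i) with hddef
  have hD : ∀ k, k ≤ n → 0 ≤ ∑ i ∈ Finset.range k, d i := by
    intro k hk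
    rcases Nat.eq_zero_or_pos k with h0 | h1
    · simp [h0]
    have hd1 : ∑ i ∈ Finset.range k, d i
        = Real.log (∏ i ∈ Finset.range k, X i) - Real.log (∏ i ∈ Finset.range k, Y i) := by
      rw [Real.log_prod (fun i _ => (hXpos i).ne'),
        Real.log_prod (fun i _ => (hYpos i).ne'), ← Finset.sum_sub_distrib]
    rw [hd1, sub_nonneg]
    have hp := hprod k h1 hk
    rw [filter_prod_eq n k hk x X hXf, filter_prod_eq n k hk y Y hYf] at hp
    exact Real.log_le_log (Finset.prod_pos fun i _ => hYpos i) hp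
  -- pointwise exponential inequality
  have expkey : ∀ u v : ℝ, 0 < u → 0 < v →
      v + v * (Real.log u - Real.log v) ≤ u := by
    intro u v hu hv
    have h := Real.add_one_le_exp (Real.log u - Real.log v)
    rw [Real.exp_sub, Real.exp_log hu, Real.exp_log hv] at h
    have h2 := (le_div_iff₀ hv).mp h
    nlinarith
  -- Part 1
  have part1 : ∑ i ∈ Finset.range n, Y i ≤ ∑ i ∈ Finset.range n, X i := by
    have h0 : 0 ≤ ∑ i ∈ Finset.range n, Y i * d i :=
      abel_nonneg n Y d hYmono (fun i _ => (hYpos i).le) hD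
    have h1 : ∑ i ∈ Finset.range n, (Y i + Y i * d i) ≤ ∑ i ∈ Finset.range n, X i :=
      Finset.sum_le_sum fun i _ => expkey (X i) (Y i) (hXpos i) (hYpos i)
    rw [Finset.sum_add_distrib] at h1
    linarith
  -- Part 2 setup
  set T : ℝ := ∑ i ∈ Finset.range n, Y i with hTdef
  set W : ℕ → ℝ := fun i => Y i * (T - Y i) with hWdef
  have hYT : ∀ i, i < n → Y i ≤ T := fun i hi =>
    Finset.single_le_sum (fun j _ => (hYpos j).le) (Finset.mem_range.mpr hi)
  have hYYT : ∀ i j, i < j → j < n → Y i + Y j ≤ T := by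
    intro i j hij hj
    have hsub : ({i, j} : Finset ℕ) ⊆ Finset.range n := by
      intro a ha
      simp only [Finset.mem_insert, Finset.mem_singleton] at ha
      rcases ha with rfl | rfl <;> simp [Finset.mem_range] <;> omega
    calc Y i + Y j = ∑ a ∈ ({i, j} : Finset ℕ), Y a := (Finset.sum_pair (Nat.ne_of_lt hij)).symm
      _ ≤ T := Finset.sum_le_sum_of_subset_of_nonneg hsub (fun a _ _ => (hYpos a).le)
  have hWnn : ∀ i, i < n → 0 ≤ W i := fun i hi =>
    mul_nonneg (hYpos i).le (sub_nonneg.mpr (hYT i hi))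
  have hWmono : ∀ i j, i ≤ j → j < n → W j ≤ W i := by
    intro i j hij hj
    rcases eq_or_lt_of_le hij with rfl | hlt
    · exact le_rfl
    have h1 : Y j ≤ Y i := hYmono i j hij hj
    have h2 : Y i + Y j ≤ T := hYYT i j hlt hj
    simp only [hWdef]
    nlinarith
  have h0 : 0 ≤ ∑ i ∈ Finset.range n, W i * d i := abel_nonneg n W d hWmono hWnn hD
  -- the symmetric-sum identity
  have swap : ∑ i ∈ Finset.range n, ∑ j ∈ Finset.range n, (if i < j then Y i * Y j * d j else 0)
      = ∑ i ∈ Finset.range n, ∑ j ∈ Finset.range n, (if j < i then Y j * Y i * d i else 0) :=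
    Finset.sum_comm
  have ident : ∑ i ∈ Finset.range n, ∑ j ∈ Finset.range n,
      (if i < j then Y i * Y j * (d i + d j) else 0) = ∑ i ∈ Finset.range n, W i * d i := by
    have A : ∑ i ∈ Finset.range n, ∑ j ∈ Finset.range n,
          (if i < j then Y i * Y j * (d i + d j) else 0)
        = (∑ i ∈ Finset.range n, ∑ j ∈ Finset.range n, (if i < j then Y i * Y j * d i else 0))
          + ∑ i ∈ Finset.range n, ∑ j ∈ Finset.range n, (if i < j then Y i * Y j * d j else 0) := by
      rw [← Finset.sum_add_distrib]
      refine Finset.sum_congr rfl fun i _ => ?_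
      rw [← Finset.sum_add_distrib]
      refine Finset.sum_congr rfl fun j _ => ?_
      by_cases h : i < j
      · simp only [if_pos h]; ring
      · simp [h]
    rw [A, swap, ← Finset.sum_add_distrib]
    refine Finset.sum_congr rfl fun i hi => ?_
    rw [← Finset.sum_add_distrib]
    have B : ∀ j, (if i < j then Y i * Y j * d i else 0) + (if j < i then Y j * Y i * d i else 0)
        = Y i * d i * (if i = j then 0 else Y j) := by
      intro j
      rcases lt_trichotomy i j with h | rfl | h
      · rw [if_pos h, if_neg (by omega), if_neg (by omega)]; ring
      · simp
      · rw [if_neg (by omega), if_pos h, if_neg (by omega)]; ring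
    rw [Finset.sum_congr rfl (fun j _ => B j), ← Finset.mul_sum]
    have C : ∑ j ∈ Finset.range n, (if i = j then 0 else Y j) = T - Y i := by
      have : ∀ j, (if i = j then 0 else Y j) = Y j - (if i = j then Y j else 0) := by
        intro j; by_cases h : i = j <;> simp [h]
      rw [Finset.sum_congr rfl (fun j _ => this j), Finset.sum_sub_distrib,
        Finset.sum_ite_eq (Finset.range n) i Y, if_pos hi]
    rw [C, hWdef]; ring
  -- pointwise pair inequality
  have pairkey : ∀ i j, i < j →
      (if i < j then Y i * Y j else 0) + (if i < j then Y i * Y j * (d i + d j) else 0)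
        ≤ (if i < j then X i * X j else 0) := by
    intro i j hij
    rw [if_pos hij, if_pos hij, if_pos hij]
    have h := Real.add_one_le_exp (d i + d j)
    have he : Real.exp (d i + d j) = (X i * X j) / (Y i * Y j) := by
      rw [Real.exp_add, hddef]
      simp only
      rw [Real.exp_sub, Real.exp_sub, Real.exp_log (hXpos i), Real.exp_log (hYpos i),
        Real.exp_log (hXpos j), Real.exp_log (hYpos j)]
      field_simp
    rw [he] at h
    have h2 := (le_div_iff₀ (mul_pos (hYpos i) (hYpos j))).mp h
    nlinarith
  have part2 : ∑ i ∈ Finset.range n, ∑ j ∈ Finset.range n, (if i < j then Y i * Y j else 0)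
      ≤ ∑ i ∈ Finset.range n, ∑ j ∈ Finset.range n, (if i < j then X i * X j else 0) := by
    have hle : ∑ i ∈ Finset.range n, ∑ j ∈ Finset.range n,
          ((if i < j then Y i * Y j else 0) + (if i < j then Y i * Y j * (d i + d j) else 0))
        ≤ ∑ i ∈ Finset.range n, ∑ j ∈ Finset.range n, (if i < j then X i * X j else 0) := by
      refine Finset.sum_le_sum fun i _ => Finset.sum_le_sum fun j _ => ?_
      by_cases h : i < j
      · exact pairkey i j h
      · simp [h]
    have heq : ∑ i ∈ Finset.range n, ∑ j ∈ Finset.range n,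
          ((if i < j then Y i * Y j else 0) + (if i < j then Y i * Y j * (d i + d j) else 0))
        = (∑ i ∈ Finset.range n, ∑ j ∈ Finset.range n, (if i < j then Y i * Y j else 0))
          + ∑ i ∈ Finset.range n, W i * d i := by
      rw [← ident, ← Finset.sum_add_distrib]
      exact Finset.sum_congr rfl fun i _ => by rw [← Finset.sum_add_distrib]
    rw [heq] at hle
    linarith
  constructor
  · rw [fin_sum_eq n y Y hYf, fin_sum_eq n x X hXf]; exact part1
  · rw [pair_sum_eq n y Y hYf, pair_sum_eq n x X hXf]; exact part2
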